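/- If X ~ N(μ, s²) with s > 0 and |μ| ≤ ρ_U, then E[max{ζ(X), 0}] ≥ (ρ_L²/(2σ²))·[erf(2ρ_U/(√2 s)) − erf((ρ_L+ρ_U)/(√2 s))], where ζ is the piecewise RGCUSUM statistic and s = σ‖p‖₂. -/

import Mathlib

open MeasureTheory ProbabilityTheory NNReal

noncomputable def erf (x : ℝ) : ℝ :=
  (2 / Real.sqrt Real.pi) * ∫ t in (0 : ℝ)..x, Real.exp (-t ^ 2)

noncomputable def zeta (σ ρL ρU x : ℝ) : ℝ :=
  if ρL ≤ |x| ∧ |x| ≤ ρU then x ^ 2 / (2 * σ ^ 2)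
  else if |x| < ρL then (2 * |x| * ρL - ρL ^ 2) / (2 * σ ^ 2)
  else (2 * |x| * ρU - ρU ^ 2) / (2 * σ ^ 2)

open Real in
lemma gaussianPDFReal_neg' (μ : ℝ) (v : ℝ≥0) (x : ℝ) :
    gaussianPDFReal μ v (-x) = gaussianPDFReal (-μ) v x := by
  simp only [gaussianPDFReal]
  congr 2
  ring

open Real in
lemma key_int (μ : ℝ) {v : ℝ≥0} (hv : 0 < (v : ℝ)) {ρL ρU : ℝ} (hL : 0 < ρL)
    (hLU : ρL ≤ ρU) (hμ : |μ| ≤ ρU) :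
    ∫ u in (ρL + ρU)..(2 * ρU), gaussianPDFReal 0 v u
      ≤ ∫ x in ρL..ρU, gaussianPDFReal μ v x := by
  have habs := abs_le.mp hμ
  have h1 : ∫ x in ρL..ρU, gaussianPDFReal μ v x
      = ∫ u in (ρL + ρU)..(2 * ρU), gaussianPDFReal μ v (u - ρU) := by
    rw [intervalIntegral.integral_comp_sub_right (gaussianPDFReal μ v) ρU]
    norm_num [two_mul]
  rw [h1]
  refine intervalIntegral.integral_mono_on (by linarith)
    ((integrable_gaussianPDFReal 0 v).intervalIntegrable)
    (((integrable_gaussianPDFReal μ v).comp_sub_right ρU).intervalIntegrable) ?_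
  intro u hu
  have hu1 : ρL + ρU ≤ u := hu.1
  simp only [gaussianPDFReal, sub_zero]
  have hsq : (u - ρU - μ) ^ 2 ≤ u ^ 2 := by
    nlinarith [mul_nonneg (by linarith : (0:ℝ) ≤ ρU + μ)
      (by linarith : (0:ℝ) ≤ 2 * u - ρU - μ)]
  gcongr

open Real in
lemma erf_diff_eq {s : ℝ} (hs : 0 < s) (v : ℝ≥0) (hv : (v : ℝ) = s ^ 2) (a b : ℝ) :
    erf (b / (Real.sqrt 2 * s)) - erf (a / (Real.sqrt 2 * s))
      = 2 * ∫ u in a..b, gaussianPDFReal 0 v u := by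
  have hcont : ∀ x y : ℝ, IntervalIntegrable (fun t : ℝ => Real.exp (-t ^ 2)) volume x y :=
    fun x y => (Real.continuous_exp.comp (by continuity)).intervalIntegrable x y
  unfold erf
  rw [← mul_sub, intervalIntegral.integral_interval_sub_left (hcont 0 _) (hcont 0 _),
    ← intervalIntegral.inv_smul_integral_comp_div]
  have hIeq : (∫ x in a..b, Real.exp (-(x / (Real.sqrt 2 * s)) ^ 2))
      = ∫ u in a..b, Real.exp (-(u - 0) ^ 2 / (2 * (v : ℝ))) := by
    refine intervalIntegral.integral_congr fun x _ => ?_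
    congr 1
    rw [hv, div_pow, mul_pow, Real.sq_sqrt (by norm_num : (0:ℝ) ≤ 2)]
    field_simp
    ring
  rw [hIeq]
  simp only [gaussianPDFReal]
  rw [intervalIntegral.integral_const_mul, smul_eq_mul, hv]
  have hsqrt : Real.sqrt (2 * π * s ^ 2) = Real.sqrt 2 * Real.sqrt π * s := by
    rw [Real.sqrt_mul (by positivity), Real.sqrt_mul (by norm_num), Real.sqrt_sq hs.le]
  rw [hsqrt]
  have h2 : Real.sqrt 2 ≠ 0 := by positivity
  have hπ : Real.sqrt π ≠ 0 := by positivity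
  rw [← mul_assoc, ← mul_assoc]
  congr 1
  field_simp

theorem stmt9 (μ s σ ρL ρU : ℝ) (hσ : 0 < σ) (hs : 0 < s) (hL : 0 < ρL)
    (hLU : ρL ≤ ρU) (hμ : |μ| ≤ ρU) (v : ℝ≥0) (hv : (v : ℝ) = s ^ 2) :
    (ρL ^ 2 / (2 * σ ^ 2)) *
        (erf (2 * ρU / (Real.sqrt 2 * s)) - erf ((ρL + ρU) / (Real.sqrt 2 * s))) ≤
      ∫ x, max (zeta σ ρL ρU x) 0 ∂(gaussianReal μ v) := by
  have hvpos : 0 < (v : ℝ) := by rw [hv]; positivity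
  have hv0 : v ≠ 0 := by
    intro h; rw [h] at hvpos; simp at hvpos
  have habs := abs_le.mp hμ
  set c := ρL ^ 2 / (2 * σ ^ 2) with hc
  have hc0 : 0 ≤ c := by positivity
  set A : Set ℝ := Set.Icc ρL ρU with hA
  set B : Set ℝ := Set.Icc (-ρU) (-ρL) with hB
  -- pointwise bounds on max (zeta _) 0
  have hmax_nonneg : ∀ x : ℝ, 0 ≤ max (zeta σ ρL ρU x) 0 := fun x => le_max_right _ _
  have hzeta_lb : ∀ x ∈ A ∪ B, c ≤ max (zeta σ ρL ρU x) 0 := by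
    intro x hx
    have hcond : ρL ≤ |x| ∧ |x| ≤ ρU := by
      rcases hx with h | h
      · rw [abs_of_pos (lt_of_lt_of_le hL h.1)]; exact ⟨h.1, h.2⟩
      · rw [abs_of_neg (by nlinarith [h.2] : x < 0)]
        exact ⟨by linarith [h.2], by linarith [h.1]⟩
    refine le_max_of_le_left ?_
    rw [zeta, if_pos hcond]
    have : ρL ^ 2 ≤ x ^ 2 := by
      nlinarith [sq_abs x, hcond.1]
    rw [hc]; gcongr
  have hzeta_ub : ∀ x : ℝ, max (zeta σ ρL ρU x) 0 ≤ (x ^ 2 + ρL ^ 2) / (2 * σ ^ 2) := by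
    intro x
    have hb0 : (0:ℝ) ≤ (x ^ 2 + ρL ^ 2) / (2 * σ ^ 2) := by positivity
    refine max_le ?_ hb0
    rw [zeta]
    split_ifs with h1 h2
    · gcongr; nlinarith
    · gcongr <;> nlinarith [sq_nonneg (|x| - ρL), sq_abs x]
    · gcongr <;> nlinarith [sq_nonneg (|x| - ρU), sq_abs x]
  -- measurability
  have hmeas : Measurable fun x : ℝ => max (zeta σ ρL ρU x) 0 := by
    refine Measurable.max ?_ measurable_const
    unfold zeta
    refine Measurable.ite ?_ (by fun_prop) (Measurable.ite ?_ (by fun_prop) (by fun_prop))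
    · exact ((measurableSet_le measurable_const measurable_id.abs).inter
        (measurableSet_le measurable_id.abs measurable_const))
    · exact measurableSet_lt measurable_id.abs measurable_const
  -- integrability
  have hInt : Integrable (fun x => max (zeta σ ρL ρU x) 0) (gaussianReal μ v) := by
    rw [gaussianReal_of_var_ne_zero μ hv0]
    have hpdf_eq : gaussianPDF μ v
        = fun x => ((gaussianPDFReal μ v x).toNNReal : ENNReal) := rfl
    rw [hpdf_eq, integrable_withDensity_iff_integrable_smul
      ((measurable_gaussianPDFReal μ v).real_toNNReal)]
    have hg0 : Integrable (fun y : ℝ =>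
        (Real.sqrt (2 * Real.pi * (v:ℝ)))⁻¹ * Real.exp (-(2 * (v:ℝ))⁻¹ * y ^ 2) *
          (((y + μ) ^ 2 + ρL ^ 2) / (2 * σ ^ 2))) := by
      have hb : 0 < (2 * (v:ℝ))⁻¹ := by positivity
      have h2 : Integrable fun y : ℝ => y ^ 2 * Real.exp (-(2 * (v:ℝ))⁻¹ * y ^ 2) := by
        have := integrable_rpow_mul_exp_neg_mul_sq (s := ((2:ℕ):ℝ)) hb (by norm_num)
        simpa [Real.rpow_natCast] using this
      have h1 : Integrable fun y : ℝ => y * Real.exp (-(2 * (v:ℝ))⁻¹ * y ^ 2) := by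
        have := integrable_rpow_mul_exp_neg_mul_sq hb (by norm_num : (-1:ℝ) < 1)
        simpa [Real.rpow_one] using this
      have h0 : Integrable fun y : ℝ => Real.exp (-(2 * (v:ℝ))⁻¹ * y ^ 2) :=
        integrable_exp_neg_mul_sq hb
      have := ((h2.const_mul ((Real.sqrt (2 * Real.pi * (v:ℝ)))⁻¹ / (2 * σ ^ 2))).add
        ((h1.const_mul ((Real.sqrt (2 * Real.pi * (v:ℝ)))⁻¹ * (2 * μ) / (2 * σ ^ 2))).add
        (h0.const_mul ((Real.sqrt (2 * Real.pi * (v:ℝ)))⁻¹ * (μ ^ 2 + ρL ^ 2) / (2 * σ ^ 2)))))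
      refine this.congr (Filter.Eventually.of_forall fun y => ?_)
      simp only [Pi.add_apply]
      ring
    have hdom : Integrable (fun x : ℝ =>
        gaussianPDFReal μ v x * ((x ^ 2 + ρL ^ 2) / (2 * σ ^ 2))) := by
      have := hg0.comp_sub_right μ
      refine this.congr (Filter.Eventually.of_forall fun x => ?_)
      simp only [gaussianPDFReal]
      rw [show -(x - μ) ^ 2 / (2 * (v:ℝ)) = -(2 * (v:ℝ))⁻¹ * (x - μ) ^ 2 by
        field_simp]
      ring_nf
    refine hdom.mono' ?_ (Filter.Eventually.of_forall fun x => ?_)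
    · exact (((measurable_gaussianPDFReal μ v).real_toNNReal).coe_nnreal_real.smul
        hmeas).aestronglyMeasurable
    · have hpdf0 : 0 ≤ gaussianPDFReal μ v x := gaussianPDFReal_nonneg μ v x
      rw [NNReal.smul_def, smul_eq_mul, Real.coe_toNNReal _ hpdf0, Real.norm_eq_abs,
        abs_of_nonneg (mul_nonneg hpdf0 (hmax_nonneg x))]
      exact mul_le_mul_of_nonneg_left (hzeta_ub x) hpdf0
  -- probabilities of A and B
  have hPA : ((gaussianReal μ v) A).toReal = ∫ x in ρL..ρU, gaussianPDFReal μ v x := by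
    rw [hA, gaussianReal_apply_eq_integral μ hv0,
      ENNReal.toReal_ofReal (setIntegral_nonneg measurableSet_Icc
        fun x _ => gaussianPDFReal_nonneg μ v x),
      MeasureTheory.integral_Icc_eq_integral_Ioc, ← intervalIntegral.integral_of_le hLU]
  have hPB : ((gaussianReal μ v) B).toReal = ∫ x in ρL..ρU, gaussianPDFReal (-μ) v x := by
    rw [hB, gaussianReal_apply_eq_integral μ hv0,
      ENNReal.toReal_ofReal (setIntegral_nonneg measurableSet_Icc
        fun x _ => gaussianPDFReal_nonneg μ v x),
      MeasureTheory.integral_Icc_eq_integral_Ioc,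
      ← intervalIntegral.integral_of_le (by linarith : -ρU ≤ -ρL),
      show (∫ x in (-ρU)..(-ρL), gaussianPDFReal μ v x)
          = ∫ x in ρL..ρU, gaussianPDFReal μ v (-x) by
        rw [intervalIntegral.integral_comp_neg (gaussianPDFReal μ v)]]
    exact intervalIntegral.integral_congr fun x _ => gaussianPDFReal_neg' μ v x
  have hkey1 := key_int μ hvpos hL hLU hμ
  have hkey2 := key_int (-μ) hvpos hL hLU (by rwa [abs_neg])
  have herf := erf_diff_eq hs v hv (ρL + ρU) (2 * ρU)
  have hdisj : Disjoint A B := by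
    rw [Set.disjoint_left]
    intro x hxA hxB
    have h1 : ρL ≤ x := hxA.1
    have h2 : x ≤ -ρL := hxB.2
    linarith
  have hunion : ((gaussianReal μ v) (A ∪ B)).toReal
      = ((gaussianReal μ v) A).toReal + ((gaussianReal μ v) B).toReal := by
    rw [measure_union hdisj measurableSet_Icc,
      ENNReal.toReal_add (measure_ne_top _ _) (measure_ne_top _ _)]
  calc c * (erf (2 * ρU / (Real.sqrt 2 * s)) - erf ((ρL + ρU) / (Real.sqrt 2 * s)))
      = c * (2 * ∫ u in (ρL + ρU)..(2 * ρU), gaussianPDFReal 0 v u) := by rw [herf]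
    _ ≤ c * (((gaussianReal μ v) A).toReal + ((gaussianReal μ v) B).toReal) := by
        refine mul_le_mul_of_nonneg_left ?_ hc0
        rw [hPA, hPB]; linarith
    _ = c * ((gaussianReal μ v) (A ∪ B)).toReal := by rw [hunion]
    _ ≤ ∫ x in A ∪ B, max (zeta σ ρL ρU x) 0 ∂(gaussianReal μ v) :=
        setIntegral_ge_of_const_le_real (measurableSet_Icc.union measurableSet_Icc)
          (measure_ne_top _ _) hzeta_lb hInt.integrableOn
    _ ≤ ∫ x, max (zeta σ ρL ρU x) 0 ∂(gaussianReal μ v) :=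
        setIntegral_le_integral hInt (Filter.Eventually.of_forall hmax_nonneg)
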